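/- Let λ > 0 and p ∈ [0, 1] be real numbers and let k be a natural number. Then ∑_{n=k}^∞ poissonPMFReal λ n · (choose n k) · p^k · (1−p)^(n−k) = poissonPMFReal (p·λ) k; that is, binomial thinning of a Poisson random variable with rate λ by probability p yields a Poisson random variable with rate p·λ. -/

import Mathlib

/-- The Poisson probability mass function with real rate `l`:
`poissonPMFReal l n = exp (-l) * l ^ n / n !`. -/
noncomputable def poissonPMFReal (l : ℝ) (n : ℕ) : ℝ :=
  Real.exp (-l) * l ^ n / n.factorial

lemma exp_tsum_aux (x : ℝ) : ∑' m : ℕ, x ^ m / m.factorial = Real.exp x := by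
  rw [Real.exp_eq_exp_ℝ, NormedSpace.exp_eq_tsum (𝕂 := ℝ)]
  congr 1; ext n
  rw [smul_eq_mul, div_eq_inv_mul]

/-- Binomial thinning of a Poisson random variable with rate `λ` by probability `p`
yields a Poisson random variable with rate `p·λ`:
`∑_{n=k}^∞ poissonPMFReal λ n · choose n k · p^k · (1−p)^(n−k) = poissonPMFReal (p·λ) k`
(the sum is indexed by `n = k + m`). -/
theorem poisson_thinning (l p : ℝ) (hl : 0 < l) (hp0 : 0 ≤ p) (hp1 : p ≤ 1) (k : ℕ) :
    (∑' m : ℕ, poissonPMFReal l (k + m) * ((k + m).choose k : ℝ) * p ^ k * (1 - p) ^ m)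
      = poissonPMFReal (p * l) k := by
  have key : ∀ m : ℕ, poissonPMFReal l (k + m) * ((k + m).choose k : ℝ) * p ^ k * (1 - p) ^ m
      = (Real.exp (-l) * p ^ k * l ^ k / k.factorial) * (((1 - p) * l) ^ m / m.factorial) := by
    intro m
    have hc : ((k + m).choose k : ℝ) * (k.factorial * m.factorial) = (k + m).factorial := by
      exact_mod_cast congrArg (Nat.cast (R := ℝ))
        (by rw [← mul_assoc]; simpa using Nat.choose_mul_factorial_mul_factorial (Nat.le_add_right k m))
    have h1 : (0:ℝ) < k.factorial := by positivity
    have h2 : (0:ℝ) < m.factorial := by positivity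
    rw [poissonPMFReal, mul_pow]
    field_simp
    rw [pow_add]
    linear_combination (l ^ k * l ^ m * p ^ k * (1 - p) ^ m) * hc
  simp_rw [key]
  rw [tsum_mul_left, exp_tsum_aux, poissonPMFReal]
  have he : Real.exp (-l) * Real.exp ((1 - p) * l) = Real.exp (-(p * l)) := by
    rw [← Real.exp_add]; ring_nf
  linear_combination (p ^ k * l ^ k / (k.factorial : ℝ)) * he
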